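/- Let (aᵢ)_{i≥1} be a nondecreasing sequence of positive reals with Σᵢ 1/aᵢ² < ∞, and define ψ(u) = √(Σᵢ 2u²/(aᵢ²+2u)²) and μ(θ) = Σᵢ 1/(aᵢ²+2θ) for u, θ > 0. Then for every u > 0, ψ'(u)/ψ(u) = (1/u) · (Σᵢ aᵢ²/(aᵢ²+2u)³)/(Σᵢ 1/(aᵢ²+2u)²); consequently ψ is increasing on (0,∞) and ψ∘μ⁻¹ is decreasing. -/

import Mathlib

open Filter Set Real

lemma term_hasDerivAt (b : ℝ) (hb : 0 < b) {x : ℝ} (hx : 0 < x) :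
    HasDerivAt (fun y => 2 * y ^ 2 / (b + 2 * y) ^ 2) (4 * x * b / (b + 2 * x) ^ 3) x := by
  have hne : (b + 2 * x) ≠ 0 := by positivity
  have h1 : HasDerivAt (fun y : ℝ => 2 * y ^ 2) (2 * (2 * x ^ 1)) x :=
    (hasDerivAt_pow 2 x).const_mul 2
  have h2 : HasDerivAt (fun y : ℝ => b + 2 * y) 2 x := by
    simpa using ((hasDerivAt_id x).const_mul 2).const_add b
  have h3 : HasDerivAt (fun y : ℝ => (b + 2 * y) ^ 2) (2 * (b + 2 * x) ^ 1 * 2) x := by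
    simpa using h2.fun_pow 2
  have := h1.fun_div h3 (by positivity)
  refine this.congr_deriv ?_
  field_simp
  ring

lemma T_summable (a : ℕ → ℝ) (hapos : ∀ i, 0 < a i) (hamono : Monotone a)
    (hasum : Summable (fun i => 1 / (a i) ^ 2)) {u : ℝ} (hu : 0 < u) :
    Summable (fun i => 1 / ((a i) ^ 2 + 2 * u) ^ 2) := by
  have hg : Summable (fun i => (1 / (a 0) ^ 2) * (1 / (a i) ^ 2)) :=
    hasum.mul_left _
  refine Summable.of_nonneg_of_le (fun i => by positivity) (fun i => ?_) hg
  have h0 := hapos 0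
  have hi := hapos i
  have hle : (a 0) ^ 2 ≤ (a i) ^ 2 := pow_le_pow_left₀ h0.le (hamono (Nat.zero_le i)) 2
  rw [one_div_mul_one_div, div_le_div_iff₀ (by positivity) (by positivity)]
  nlinarith [hle, sq_nonneg u, mul_pos (pow_pos hi 2) hu, pow_pos hi 2]

lemma A_summable (a : ℕ → ℝ) (hapos : ∀ i, 0 < a i)
    (hasum : Summable (fun i => 1 / (a i) ^ 2)) {u : ℝ} (hu : 0 < u) :
    Summable (fun i => (a i) ^ 2 / ((a i) ^ 2 + 2 * u) ^ 3) := by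
  have hg : Summable (fun i => (1 / (2 * u)) * (1 / (a i) ^ 2)) :=
    hasum.mul_left _
  refine Summable.of_nonneg_of_le (fun i => by positivity) (fun i => ?_) hg
  have hi := hapos i
  have hb : (0:ℝ) < (a i) ^ 2 := pow_pos hi 2
  rw [one_div_mul_one_div, div_le_div_iff₀ (by positivity) (by positivity)]
  nlinarith [mul_pos (mul_pos hb hb) hu, pow_pos hb 3,
    mul_pos hb (mul_pos hu hu), pow_pos hu 3]

lemma S_summable (a : ℕ → ℝ) (hapos : ∀ i, 0 < a i) (hamono : Monotone a)
    (hasum : Summable (fun i => 1 / (a i) ^ 2)) {u : ℝ} (hu : 0 < u) :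
    Summable (fun i => 2 * u ^ 2 / ((a i) ^ 2 + 2 * u) ^ 2) := by
  apply Summable.congr ((T_summable a hapos hamono hasum hu).mul_left (2 * u ^ 2))
  intro i; rw [mul_one_div]

lemma mu_summable (a : ℕ → ℝ) (hapos : ∀ i, 0 < a i)
    (hasum : Summable (fun i => 1 / (a i) ^ 2)) {θ : ℝ} (hθ : 0 < θ) :
    Summable (fun i => 1 / ((a i) ^ 2 + 2 * θ)) := by
  refine Summable.of_nonneg_of_le (fun i => by positivity) (fun i => ?_) hasum
  have hi := hapos i
  apply one_div_le_one_div_of_le (by positivity)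
  nlinarith

lemma S_hasDerivAt (a : ℕ → ℝ) (hapos : ∀ i, 0 < a i) (hamono : Monotone a)
    (hasum : Summable (fun i => 1 / (a i) ^ 2)) {u : ℝ} (hu : 0 < u) :
    HasDerivAt (fun x => ∑' i : ℕ, 2 * x ^ 2 / ((a i) ^ 2 + 2 * x) ^ 2)
      (∑' i : ℕ, 4 * u * (a i) ^ 2 / ((a i) ^ 2 + 2 * u) ^ 3) u := by
  apply hasDerivAt_tsum_of_isPreconnected
    (u := fun i => 2 / (a i) ^ 2) (t := Ioi (0 : ℝ)) (y₀ := u)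
    (g' := fun i x => 4 * x * (a i) ^ 2 / ((a i) ^ 2 + 2 * x) ^ 3)
  · exact Summable.congr (hasum.mul_left 2) (fun i => by rw [mul_one_div])
  · exact isOpen_Ioi
  · exact (convex_Ioi (0:ℝ)).isPreconnected
  · intro i y hy
    exact term_hasDerivAt ((a i) ^ 2) (pow_pos (hapos i) 2) hy
  · intro i y hy
    have hi := hapos i
    have hb : (0:ℝ) < (a i) ^ 2 := pow_pos hi 2
    have hy' : (0 : ℝ) < y := hy
    rw [Real.norm_eq_abs, abs_of_nonneg (by positivity),
      div_le_div_iff₀ (by positivity) (by positivity)]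
    nlinarith [mul_pos (mul_pos hb hb) hy', pow_pos hb 3,
      mul_pos hb (mul_pos hy' hy'), pow_pos hy' 3]
  · exact hu
  · exact S_summable a hapos hamono hasum hu
  · exact hu

theorem psi_logDeriv_and_monotone (a : ℕ → ℝ) (hapos : ∀ i, 0 < a i)
    (hamono : Monotone a) (hasum : Summable (fun i => 1 / (a i) ^ 2))
    (ψ μ μInv : ℝ → ℝ)
    (hψ : ∀ u : ℝ, ψ u = Real.sqrt (∑' i : ℕ, 2 * u ^ 2 / ((a i) ^ 2 + 2 * u) ^ 2))
    (hμ : ∀ θ : ℝ, μ θ = ∑' i : ℕ, 1 / ((a i) ^ 2 + 2 * θ))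
    (hμInv : ∀ θ > (0 : ℝ), μInv (μ θ) = θ) :
    (∀ u > (0 : ℝ),
      deriv ψ u / ψ u =
        (1 / u) *
          ((∑' i : ℕ, (a i) ^ 2 / ((a i) ^ 2 + 2 * u) ^ 3) /
            (∑' i : ℕ, 1 / ((a i) ^ 2 + 2 * u) ^ 2))) ∧
    StrictMonoOn ψ (Set.Ioi 0) ∧
    StrictAntiOn (fun s => ψ (μInv s)) (μ '' Set.Ioi 0) := by
  have hψfun : ψ = fun x => Real.sqrt (∑' i : ℕ, 2 * x ^ 2 / ((a i) ^ 2 + 2 * x) ^ 2) :=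
    funext hψ
  set S : ℝ → ℝ := fun x => ∑' i : ℕ, 2 * x ^ 2 / ((a i) ^ 2 + 2 * x) ^ 2 with hS
  set T : ℝ → ℝ := fun x => ∑' i : ℕ, 1 / ((a i) ^ 2 + 2 * x) ^ 2 with hT
  set A : ℝ → ℝ := fun x => ∑' i : ℕ, (a i) ^ 2 / ((a i) ^ 2 + 2 * x) ^ 3 with hA
  have hTpos : ∀ u : ℝ, 0 < u → 0 < T u := fun u hu =>
    Summable.tsum_pos (T_summable a hapos hamono hasum hu) (fun i => by positivity) 0
      (by have := hapos 0; positivity)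
  have hApos : ∀ u : ℝ, 0 < u → 0 < A u := fun u hu =>
    Summable.tsum_pos (A_summable a hapos hasum hu) (fun i => by positivity) 0
      (by have := hapos 0; positivity)
  have hSeq : ∀ u : ℝ, S u = 2 * u ^ 2 * T u := by
    intro u
    rw [hS, hT, ← tsum_mul_left]
    exact tsum_congr fun i => by rw [mul_one_div]
  have hSpos : ∀ u : ℝ, 0 < u → 0 < S u := fun u hu => by
    rw [hSeq]; exact mul_pos (by positivity) (hTpos u hu)
  have hψderiv : ∀ u : ℝ, 0 < u →
      HasDerivAt ψ (1 / (2 * Real.sqrt (S u)) * (4 * u * A u)) u := by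
    intro u hu
    have hd : HasDerivAt S (4 * u * A u) u := by
      have h := S_hasDerivAt a hapos hamono hasum hu
      have heq : (∑' i : ℕ, 4 * u * (a i) ^ 2 / ((a i) ^ 2 + 2 * u) ^ 3) = 4 * u * A u := by
        rw [hA, ← tsum_mul_left]
        exact tsum_congr fun i => by rw [mul_div_assoc]
      rwa [heq] at h
    rw [hψfun]
    exact (Real.hasDerivAt_sqrt (ne_of_gt (hSpos u hu))).comp u hd
  have hmono : StrictMonoOn ψ (Set.Ioi 0) := by
    apply strictMonoOn_of_deriv_pos (convex_Ioi 0)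
    · intro x hx
      exact ((hψderiv x hx).differentiableAt.continuousAt).continuousWithinAt
    · intro x hx
      rw [interior_Ioi] at hx
      rw [(hψderiv x hx).deriv]
      have h1 := hApos x hx
      have h2 := Real.sqrt_pos.mpr (hSpos x hx)
      have hx' : (0:ℝ) < x := hx
      exact mul_pos (one_div_pos.mpr (by linarith))
        (mul_pos (by linarith) h1)
  refine ⟨?_, hmono, ?_⟩
  · intro u hu
    rw [(hψderiv u hu).deriv, show ψ u = Real.sqrt (S u) from hψ u]
    have hs : Real.sqrt (S u) * Real.sqrt (S u) = S u :=
      Real.mul_self_sqrt (hSpos u hu).le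
    have hss : Real.sqrt (S u) * Real.sqrt (S u) = 2 * u ^ 2 * T u := by
      rw [hs, hSeq]
    have hspos : 0 < Real.sqrt (S u) := Real.sqrt_pos.mpr (hSpos u hu)
    have hTne : T u ≠ 0 := ne_of_gt (hTpos u hu)
    have hune : u ≠ 0 := ne_of_gt hu
    show _ = (1 / u) * (A u / T u)
    field_simp
    nlinarith [hss, hApos u hu, hTpos u hu, hspos, hu]
  · have hμanti : ∀ θ₁ θ₂ : ℝ, 0 < θ₁ → θ₁ < θ₂ → μ θ₂ < μ θ₁ := by
      intro θ₁ θ₂ h1 hlt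
      have h2 : 0 < θ₂ := lt_trans h1 hlt
      rw [hμ, hμ]
      refine Summable.tsum_lt_tsum (i := 0) (fun i => ?_) ?_
        (mu_summable a hapos hasum h2) (mu_summable a hapos hasum h1)
      · have hi := hapos i
        apply one_div_le_one_div_of_le (by positivity)
        linarith
      · have h0 := hapos 0
        apply one_div_lt_one_div_of_lt (by positivity)
        linarith
    rintro s₁ ⟨θ₁, hθ₁, rfl⟩ s₂ ⟨θ₂, hθ₂, rfl⟩ hlt
    simp only
    rw [hμInv θ₁ hθ₁, hμInv θ₂ hθ₂]
    have hθ₁' : (0:ℝ) < θ₁ := hθ₁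
    have hθ₂' : (0:ℝ) < θ₂ := hθ₂
    have hθlt : θ₂ < θ₁ := by
      rcases lt_trichotomy θ₁ θ₂ with h | h | h
      · exact absurd (hμanti θ₁ θ₂ hθ₁' h) (not_lt.mpr hlt.le)
      · exact absurd (h ▸ hlt) (lt_irrefl _)
      · exact h
    exact hmono hθ₂ hθ₁ hθlt
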